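/- arXiv:1301.4485 — 2 statements merged into one kernel-verified Lean document; each statement's English description precedes it below -/
import Mathlib

section
/- Let L be a complete lattice equipped with a commutative, associative binary operation ∧ₜ (a 'tensor') that distributes over arbitrary joins and satisfies x ∧ₜ y ≤ x for all x, y. Suppose there is an order-reversing involution a : L → L satisfying: e ≤ a(x) if and only if e ∧ₜ x = 0. If every nonzero x ∈ L satisfies x ∧ₜ x ≠ 0, then every element x of L is complemented in the sense that x ∨ a(x) is the maximum element of L. -/
/-- If a complete lattice carries a commutative associative tensor distributing over
arbitrary joins with `x ∧ₜ y ≤ x`, and an order-reversing involution `a` with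
`e ≤ a x ↔ e ∧ₜ x = 0`, and there are no square-zero elements, then every `x` is
complemented: `x ⊔ a x` is the maximum. -/
theorem stmt_4 {L : Type*} [CompleteLattice L] (t : L → L → L) (a : L → L)
    (hcomm : ∀ x y, t x y = t y x)
    (hassoc : ∀ x y z, t (t x y) z = t x (t y z))
    (hdist : ∀ x (S : Set L), t x (sSup S) = ⨆ y ∈ S, t x y)
    (hle : ∀ x y, t x y ≤ x)
    (hanti : ∀ x y, x ≤ y → a y ≤ a x)
    (hinv : ∀ x, a (a x) = x)
    (hgal : ∀ e x, e ≤ a x ↔ t e x = ⊥)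
    (hsq : ∀ x, x ≠ ⊥ → t x x ≠ ⊥) :
    ∀ x, x ⊔ a x = ⊤ := by
  intro x
  set X := x ⊔ a x with hX
  set c := a X with hc
  -- c ≤ X
  have hcax : c ≤ a x := hanti x X le_sup_left
  have hcX : c ≤ X := le_trans hcax le_sup_right
  -- t c X = ⊥
  have htcX : t c X = ⊥ := (hgal c X).mp le_rfl
  -- monotonicity: t c c ≤ t c X
  have hpair : t c X = t c c ⊔ t c X := by
    have h1 : sSup ({c, X} : Set L) = X := by
      rw [sSup_pair, sup_eq_right.mpr hcX]
    have h2 := hdist c ({c, X} : Set L)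
    rw [h1, iSup_pair] at h2
    exact h2
  have htcc : t c c = ⊥ := by
    have : t c c ≤ ⊥ := by
      rw [← htcX, hpair]; exact le_sup_left
    exact le_bot_iff.mp this
  have hcbot : c = ⊥ := by
    by_contra h
    exact hsq c h htcc
  -- a ⊥ = ⊤
  have habot : a ⊥ = ⊤ := by
    have : (⊤ : L) ≤ a ⊥ := (hgal ⊤ ⊥).mpr (le_bot_iff.mp (by rw [hcomm]; exact hle ⊥ ⊤))
    exact top_unique this
  calc X = a (a X) := (hinv X).symm
    _ = a ⊥ := by rw [← hc, hcbot]
    _ = ⊤ := habot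
end

section
/- Let L be a complete lattice with a commutative associative tensor ∧ₜ distributing over arbitrary joins and with unit equal to the maximum 1. The subset DL of tensor-idempotent elements (x with x ∧ₜ x = x) is closed under arbitrary joins, and on DL the operation ∧ₜ computes the greatest lower bound within DL; consequently DL is a frame (meets distribute over arbitrary joins). -/
/-- The sub-poset `DL` of tensor-idempotent elements is closed under arbitrary joins,
the tensor computes greatest lower bounds within `DL`, and meets (given by the tensor)
distribute over arbitrary joins, so `DL` is a frame. -/
theorem stmt_7 {L : Type*} [CompleteLattice L] (t : L → L → L)
    (hcomm : ∀ x y, t x y = t y x)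
    (hassoc : ∀ x y z, t (t x y) z = t x (t y z))
    (hdist : ∀ x (S : Set L), t x (sSup S) = ⨆ y ∈ S, t x y)
    (hunit : ∀ x, t x ⊤ = x)
    (hle : ∀ x y, t x y ≤ x) :
    (∀ S : Set L, (∀ x ∈ S, t x x = x) → t (sSup S) (sSup S) = sSup S) ∧
    (∀ x y, t x x = x → t y y = y →
      t (t x y) (t x y) = t x y ∧ t x y ≤ x ∧ t x y ≤ y ∧
      (∀ z, t z z = z → z ≤ x → z ≤ y → z ≤ t x y)) ∧
    (∀ x, ∀ S : Set L, t x (sSup S) = ⨆ y ∈ S, t x y) := by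
  have monoR : ∀ x {y y' : L}, y ≤ y' → t x y ≤ t x y' := by
    intro x y y' h
    have h1 : t x (sSup {y, y'}) = ⨆ z ∈ ({y, y'} : Set L), t x z := hdist x _
    have h2 : sSup ({y, y'} : Set L) = y' := by
      rw [sSup_pair, sup_eq_right.mpr h]
    rw [h2] at h1
    rw [h1]
    exact le_iSup₂_of_le y (by simp) le_rfl
  have monoL : ∀ {x x' : L} (y : L), x ≤ x' → t x y ≤ t x' y := by
    intro x x' y h
    rw [hcomm x y, hcomm x' y]; exact monoR y h
  refine ⟨?_, ?_, fun x S => hdist x S⟩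
  · intro S hS
    apply le_antisymm (hle _ _)
    apply sSup_le
    intro x hx
    calc x = t x x := (hS x hx).symm
      _ ≤ t (sSup S) x := monoL x (le_sSup hx)
      _ ≤ t (sSup S) (sSup S) := monoR _ (le_sSup hx)
  · intro x y hx hy
    refine ⟨?_, hle x y, by rw [hcomm]; exact hle y x, ?_⟩
    · calc t (t x y) (t x y) = t x (t y (t x y)) := hassoc ..
        _ = t x (t y (t y x)) := by rw [hcomm x y]
        _ = t x (t (t y y) x) := by rw [← hassoc y y x]
        _ = t x (t x y) := by rw [hy, hcomm y x]
        _ = t (t x x) y := (hassoc ..).symm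
        _ = t x y := by rw [hx]
    · intro z hz h1 h2
      calc z = t z z := hz.symm
        _ ≤ t x z := monoL z h1
        _ ≤ t x y := monoR x h2
end
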